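/- Let g : Y → F be a function from a metric space to a Banach space, let a > 0 and b ≥ 2a. Then there exists a function g̃ : Y → F with modulus of continuity ω_{g̃} ≤ 3·ω_g such that g̃(y) = g(y) whenever ‖g(y)‖ ≤ a and g̃(y) = 0 whenever ‖g(y)‖ ≥ b. -/

import Mathlib

open ENNReal

/-- Modulus of continuity: ω_g(ε) = sup{‖g y₁ - g y₂‖ : dist y₁ y₂ ≤ ε}, valued in [0,∞]. -/
noncomputable def modulus {Y F : Type*} [PseudoMetricSpace Y] [NormedAddCommGroup F]
    (g : Y → F) (ε : ℝ) : ℝ≥0∞ :=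
  ⨆ (p : Y × Y) (_ : dist p.1 p.2 ≤ ε), (‖g p.1 - g p.2‖₊ : ℝ≥0∞)

theorem stmt2 {Y F : Type*} [MetricSpace Y] [NormedAddCommGroup F] [NormedSpace ℝ F]
    [CompleteSpace F]
    (g : Y → F) (a b : ℝ) (ha : 0 < a) (hb : 2 * a ≤ b) :
    ∃ gt : Y → F,
      (∀ ε : ℝ, modulus gt ε ≤ 3 * modulus g ε) ∧
      (∀ y, ‖g y‖ ≤ a → gt y = g y) ∧
      (∀ y, b ≤ ‖g y‖ → gt y = 0) := by
  have hba : 0 < b - a := by linarith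
  have haba : a ≤ b - a := by linarith
  set r : F → F := fun v => (a / max a ‖v‖) • v with hr
  set γ : ℝ → ℝ := fun t => min 1 (max 0 ((b - t) / (b - a))) with hγ
  set gt : Y → F := fun y => γ ‖g y‖ • r (g y) with hgt
  have hM : ∀ v : F, 0 < max a ‖v‖ := fun v => lt_max_of_lt_left ha
  have hρ_nonneg : ∀ v : F, 0 ≤ a / max a ‖v‖ := fun v => div_nonneg ha.le (hM v).le
  have hρ_le : ∀ v : F, a / max a ‖v‖ ≤ 1 := fun v =>
    div_le_one_of_le₀ (le_max_left _ _) (hM v).le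
  have hrnorm : ∀ v : F, ‖r v‖ ≤ a := by
    intro v
    rw [hr]
    simp only [norm_smul, Real.norm_eq_abs, abs_of_nonneg (hρ_nonneg v)]
    rw [div_mul_eq_mul_div, div_le_iff₀ (hM v)]
    have h1 := le_max_right a ‖v‖
    nlinarith [norm_nonneg v]
  have hr2 : ∀ u v : F, ‖r u - r v‖ ≤ 2 * ‖u - v‖ := by
    intro u v
    have hdecomp : r u - r v = (a / max a ‖u‖) • (u - v) +
        (a / max a ‖u‖ - a / max a ‖v‖) • v := by
      simp only [hr, smul_sub, sub_smul]; abel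
    have h1 : ‖(a / max a ‖u‖) • (u - v)‖ ≤ ‖u - v‖ := by
      rw [norm_smul, Real.norm_eq_abs, abs_of_nonneg (hρ_nonneg u)]
      nlinarith [hρ_le u, norm_nonneg (u - v)]
    have h2 : ‖(a / max a ‖u‖ - a / max a ‖v‖) • v‖ ≤ ‖u - v‖ := by
      rw [norm_smul, Real.norm_eq_abs]
      have he : a / max a ‖u‖ - a / max a ‖v‖ =
          a * (max a ‖v‖ - max a ‖u‖) / (max a ‖u‖ * max a ‖v‖) := by
        field_simp
      rw [he, abs_div, abs_mul, abs_of_pos ha,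
        abs_of_pos (mul_pos (hM u) (hM v)), div_mul_eq_mul_div,
        div_le_iff₀ (mul_pos (hM u) (hM v))]
      have h3 : |max a ‖v‖ - max a ‖u‖| ≤ ‖u - v‖ := by
        have h4 : |max ‖v‖ a - max ‖u‖ a| ≤ |‖v‖ - ‖u‖| := abs_max_sub_max_le_abs _ _ _
        have h5 : |‖v‖ - ‖u‖| ≤ ‖v - u‖ := abs_norm_sub_norm_le v u
        rw [max_comm a ‖v‖, max_comm a ‖u‖]
        rw [norm_sub_rev]
        exact h4.trans h5
      have h6 : a * ‖v‖ ≤ max a ‖u‖ * max a ‖v‖ := by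
        have := le_max_left a ‖u‖
        have := le_max_right a ‖v‖
        nlinarith [norm_nonneg v, (hM v).le]
      have h7 := mul_le_mul h3 h6 (by positivity) (norm_nonneg (u - v))
      nlinarith [h7]
    calc ‖r u - r v‖ ≤ ‖(a / max a ‖u‖) • (u - v)‖ +
          ‖(a / max a ‖u‖ - a / max a ‖v‖) • v‖ := by rw [hdecomp]; exact norm_add_le _ _
      _ ≤ ‖u - v‖ + ‖u - v‖ := add_le_add h1 h2
      _ = 2 * ‖u - v‖ := by ring
  have hγ0 : ∀ t, 0 ≤ γ t := fun t => le_min zero_le_one (le_max_left _ _)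
  have hγ1 : ∀ t, γ t ≤ 1 := fun t => min_le_left _ _
  have hγlip : ∀ s t, |γ s - γ t| ≤ |s - t| / (b - a) := by
    intro s t
    have h1 : |γ s - γ t| ≤ |max 0 ((b - s) / (b - a)) - max 0 ((b - t) / (b - a))| := by
      have := abs_min_sub_min_le_max 1 (max 0 ((b - s) / (b - a))) 1
        (max 0 ((b - t) / (b - a)))
      simpa using this
    have h2 : |max 0 ((b - s) / (b - a)) - max 0 ((b - t) / (b - a))| ≤
        |(b - s) / (b - a) - (b - t) / (b - a)| := by
      have := abs_max_sub_max_le_max 0 ((b - s) / (b - a)) 0 ((b - t) / (b - a))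
      simpa using this
    have h3 : (b - s) / (b - a) - (b - t) / (b - a) = (t - s) / (b - a) := by
      field_simp
      ring
    refine (h1.trans h2).trans ?_
    rw [h3, abs_div, abs_of_pos hba, abs_sub_comm]
  have key : ∀ y₁ y₂ : Y, ‖gt y₁ - gt y₂‖ ≤ 3 * ‖g y₁ - g y₂‖ := by
    intro y₁ y₂
    have hdecomp : gt y₁ - gt y₂ = γ ‖g y₁‖ • (r (g y₁) - r (g y₂)) +
        (γ ‖g y₁‖ - γ ‖g y₂‖) • r (g y₂) := by
      simp only [hgt, smul_sub, sub_smul]; abel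
    have h1 : ‖γ ‖g y₁‖ • (r (g y₁) - r (g y₂))‖ ≤ 2 * ‖g y₁ - g y₂‖ := by
      rw [norm_smul, Real.norm_eq_abs, abs_of_nonneg (hγ0 _)]
      nlinarith [hγ1 ‖g y₁‖, hγ0 ‖g y₁‖, hr2 (g y₁) (g y₂),
        norm_nonneg (r (g y₁) - r (g y₂))]
    have h2 : ‖(γ ‖g y₁‖ - γ ‖g y₂‖) • r (g y₂)‖ ≤ ‖g y₁ - g y₂‖ := by
      rw [norm_smul, Real.norm_eq_abs]
      have h3 := hγlip ‖g y₁‖ ‖g y₂‖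
      have h4 : |‖g y₁‖ - ‖g y₂‖| ≤ ‖g y₁ - g y₂‖ := abs_norm_sub_norm_le _ _
      have h5 := hrnorm (g y₂)
      have h6 : |γ ‖g y₁‖ - γ ‖g y₂‖| * (b - a) ≤ ‖g y₁ - g y₂‖ := by
        have h6' : |γ ‖g y₁‖ - γ ‖g y₂‖| ≤ ‖g y₁ - g y₂‖ / (b - a) :=
          h3.trans (by gcongr)
        exact (le_div_iff₀ hba).1 h6'
      nlinarith [abs_nonneg (γ ‖g y₁‖ - γ ‖g y₂‖), norm_nonneg (r (g y₂)), haba]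
    calc ‖gt y₁ - gt y₂‖ ≤ ‖γ ‖g y₁‖ • (r (g y₁) - r (g y₂))‖ +
          ‖(γ ‖g y₁‖ - γ ‖g y₂‖) • r (g y₂)‖ := by rw [hdecomp]; exact norm_add_le _ _
      _ ≤ 2 * ‖g y₁ - g y₂‖ + ‖g y₁ - g y₂‖ := add_le_add h1 h2
      _ = 3 * ‖g y₁ - g y₂‖ := by ring
  refine ⟨gt, ?_, ?_, ?_⟩
  · intro ε
    rw [modulus, modulus, ENNReal.mul_iSup]
    refine iSup₂_le fun p hp => ?_
    have hkey : ‖gt p.1 - gt p.2‖₊ ≤ 3 * ‖g p.1 - g p.2‖₊ := by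
      rw [← NNReal.coe_le_coe]
      push_cast
      simpa using key p.1 p.2
    calc (‖gt p.1 - gt p.2‖₊ : ℝ≥0∞) ≤ ((3 * ‖g p.1 - g p.2‖₊ : NNReal) : ℝ≥0∞) :=
        ENNReal.coe_le_coe.2 hkey
      _ = 3 * (‖g p.1 - g p.2‖₊ : ℝ≥0∞) := by push_cast; ring
      _ ≤ _ := le_iSup_of_le p (mul_le_mul_right
          (le_iSup (fun _ : dist p.1 p.2 ≤ ε => ((‖g p.1 - g p.2‖₊ : NNReal) : ℝ≥0∞)) hp) 3)
  · intro y hy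
    have h1 : max a ‖g y‖ = a := max_eq_left hy
    have h2 : γ ‖g y‖ = 1 := by
      rw [hγ]
      simp only
      have : (1 : ℝ) ≤ (b - ‖g y‖) / (b - a) := by
        rw [le_div_iff₀ hba]
        linarith
      rw [max_eq_right (le_trans zero_le_one this), min_eq_left this]
    simp [hgt, hr, h1, h2, div_self ha.ne']
  · intro y hy
    have h2 : γ ‖g y‖ = 0 := by
      rw [hγ]
      simp only
      have : (b - ‖g y‖) / (b - a) ≤ 0 := div_nonpos_of_nonpos_of_nonneg (by linarith) hba.le
      rw [max_eq_left this]
      simp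
    simp [hgt, h2]
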